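/- Let k be a field of characteristic p > 0. The center of the first Weyl algebra A₁(k) is the polynomial subalgebra k[x^p, ∂^p]. -/

import Mathlib

/-- The defining relation of the first Weyl algebra: `∂ * x = x * ∂ + 1`,
where `x = ι false` and `∂ = ι true`. -/
inductive WeylRel (k : Type) [CommRing k] : FreeAlgebra k Bool → FreeAlgebra k Bool → Prop
  | rel : WeylRel k (FreeAlgebra.ι k true * FreeAlgebra.ι k false)
      (FreeAlgebra.ι k false * FreeAlgebra.ι k true + 1)

/-- The first Weyl algebra `A₁(k) = k⟨x, ∂⟩/(∂x - x∂ - 1)`. -/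
abbrev Weyl (k : Type) [CommRing k] := RingQuot (WeylRel k)

/-- The generator `x` of the first Weyl algebra. -/
noncomputable def Weyl.x (k : Type) [CommRing k] : Weyl k :=
  RingQuot.mkRingHom (WeylRel k) (FreeAlgebra.ι k false)

/-- The generator `∂` of the first Weyl algebra. -/
noncomputable def Weyl.d (k : Type) [CommRing k] : Weyl k :=
  RingQuot.mkRingHom (WeylRel k) (FreeAlgebra.ι k true)

namespace WeylAux

variable (k : Type) [CommRing k]

open Weyl

lemma rel_dx : d k * x k = x k * d k + 1 := by
  have := RingQuot.mkRingHom_rel (WeylRel.rel (k := k))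
  simpa only [map_mul, map_add, map_one, Weyl.x, Weyl.d] using this

variable {k}

lemma d_mul_x_pow (i : ℕ) : d k * x k ^ i = x k ^ i * d k + i • x k ^ (i - 1) := by
  induction i with
  | zero => simp
  | succ n ih =>
    rw [pow_succ, ← mul_assoc, ih, add_mul, mul_assoc, rel_dx, succ_nsmul]
    cases n with
    | zero => simp [mul_add]
    | succ m =>
      simp only [Nat.add_sub_cancel]
      rw [mul_add, mul_one, ← mul_assoc, ← pow_succ, smul_mul_assoc, ← pow_succ]
      abel

lemma d_pow_mul_x (j : ℕ) : d k ^ j * x k = x k * d k ^ j + j • d k ^ (j - 1) := by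
  induction j with
  | zero => simp
  | succ n ih =>
    rw [pow_succ, mul_assoc, rel_dx, mul_add, mul_one, ← mul_assoc, ih, add_mul, succ_nsmul]
    cases n with
    | zero => simp
    | succ m =>
      simp only [Nat.add_sub_cancel]
      rw [mul_assoc, ← pow_succ, smul_mul_assoc, ← pow_succ]
      abel

/-- The basis family `x^i ∂^j`. -/
noncomputable def b (ij : ℕ × ℕ) : Weyl k := x k ^ ij.1 * d k ^ ij.2

lemma b_mul_x (i j : ℕ) : b (k := k) (i, j) * x k = b (i + 1, j) + j • b (i, j - 1) := by
  simp only [b, mul_assoc, d_pow_mul_x, mul_add, mul_smul_comm]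
  rw [← mul_assoc, ← pow_succ]

lemma b_mul_d (i j : ℕ) : b (k := k) (i, j) * d k = b (i, j + 1) := by
  simp [b, mul_assoc, ← pow_succ]

lemma d_mul_b (i j : ℕ) : d k * b (k := k) (i, j) = b (i, j + 1) + i • b (i - 1, j) := by
  simp only [b, ← mul_assoc, d_mul_x_pow, add_mul, smul_mul_assoc]
  rw [mul_assoc, ← pow_succ']

lemma x_mul_b (i j : ℕ) : x k * b (k := k) (i, j) = b (i + 1, j) := by
  simp [b, ← mul_assoc, ← pow_succ']

/-- The span of the `x^i ∂^j`. -/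
noncomputable def M : Submodule k (Weyl k) := Submodule.span k (Set.range (b (k := k)))

lemma b_mem (ij : ℕ × ℕ) : b (k := k) ij ∈ M (k := k) :=
  Submodule.subset_span ⟨ij, rfl⟩

lemma mul_x_mem {w : Weyl k} (hw : w ∈ M (k := k)) : w * x k ∈ M (k := k) := by
  induction hw using Submodule.span_induction with
  | mem w hw =>
    obtain ⟨⟨i, j⟩, rfl⟩ := hw
    rw [b_mul_x]
    exact add_mem (b_mem _) (Submodule.smul_of_tower_mem _ _ (b_mem _))
  | zero => simp
  | add _ _ _ _ h1 h2 => rw [add_mul]; exact add_mem h1 h2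
  | smul a _ _ h => rw [smul_mul_assoc]; exact Submodule.smul_mem _ _ h

lemma mul_d_mem {w : Weyl k} (hw : w ∈ M (k := k)) : w * d k ∈ M (k := k) := by
  induction hw using Submodule.span_induction with
  | mem w hw =>
    obtain ⟨⟨i, j⟩, rfl⟩ := hw
    rw [b_mul_d]; exact b_mem _
  | zero => simp
  | add _ _ _ _ h1 h2 => rw [add_mul]; exact add_mem h1 h2
  | smul a _ _ h => rw [smul_mul_assoc]; exact Submodule.smul_mem _ _ h

lemma mul_b_mem {w : Weyl k} (hw : w ∈ M (k := k)) (i j : ℕ) :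
    w * b (i, j) ∈ M (k := k) := by
  induction j with
  | zero =>
    induction i with
    | zero => simpa [b] using hw
    | succ n ihn =>
      have : b (k := k) (n + 1, 0) = b (n, 0) * x k := by simp [b, pow_succ]
      rw [this, ← mul_assoc]
      exact mul_x_mem ihn
  | succ m ihm =>
    have : b (k := k) (i, m + 1) = b (i, m) * d k := (b_mul_d i m).symm
    rw [this, ← mul_assoc]
    exact mul_d_mem ihm

lemma mul_mem' {w v : Weyl k} (hw : w ∈ M (k := k)) (hv : v ∈ M (k := k)) :
    w * v ∈ M (k := k) := by
  induction hv using Submodule.span_induction with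
  | mem v hv => obtain ⟨⟨i, j⟩, rfl⟩ := hv; exact mul_b_mem hw i j
  | zero => simp
  | add _ _ _ _ h1 h2 => rw [mul_add]; exact add_mem h1 h2
  | smul a _ _ h => rw [mul_smul_comm]; exact Submodule.smul_mem _ _ h

lemma mem_M (w : Weyl k) : w ∈ M (k := k) := by
  obtain ⟨f, rfl⟩ := RingQuot.mkAlgHom_surjective k (WeylRel k) w
  induction f using FreeAlgebra.induction with
  | grade0 r =>
    rw [AlgHom.commutes]
    have : (algebraMap k (Weyl k)) r = r • b (0, 0) := by simp [b, Algebra.smul_def]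
    rw [this]
    exact Submodule.smul_mem _ _ (b_mem _)
  | grade1 v =>
    have key : ∀ g : FreeAlgebra k Bool, (RingQuot.mkAlgHom k (WeylRel k)) g
        = RingQuot.mkRingHom (WeylRel k) g := fun g => by
      rw [← RingQuot.mkAlgHom_coe k]; rfl
    cases v
    · have : (RingQuot.mkAlgHom k (WeylRel k)) (FreeAlgebra.ι k false) = b (1, 0) := by
        rw [key]; simp [b, Weyl.x]
      rw [this]; exact b_mem _
    · have : (RingQuot.mkAlgHom k (WeylRel k)) (FreeAlgebra.ι k true) = b (0, 1) := by
        rw [key]; simp [b, Weyl.d]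
      rw [this]; exact b_mem _
  | mul a c ha hc => rw [map_mul]; exact mul_mem' ha hc
  | add a c ha hc => rw [map_add]; exact add_mem ha hc


variable (k)
open MvPolynomial


/-- The target polynomial ring `k[X, T]`. -/
abbrev V := MvPolynomial (Fin 2) k

/-- Multiplication by `X 0`. -/
noncomputable def Mx : Module.End k (V k) := LinearMap.mulLeft k (X 0)

/-- `∂/∂X + multiplication by T`. -/
noncomputable def Dop : Module.End k (V k) :=
  (pderiv (0 : Fin 2)).toLinearMap + LinearMap.mulLeft k (X 1)

lemma Dop_Mx : Dop k * Mx k = Mx k * Dop k + 1 := by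
  apply LinearMap.ext; intro f
  simp only [Dop, Mx, Module.End.mul_eq_comp, LinearMap.add_apply, LinearMap.comp_apply,
    LinearMap.mulLeft_apply, Derivation.coeFn_coe, Module.End.one_apply, LinearMap.add_apply,
    Derivation.leibniz, pderiv_X_self, smul_eq_mul, mul_one, one_mul]
  ring

lemma Dop_pow_one (j : ℕ) : (Dop k ^ j) 1 = X 1 ^ j := by
  induction j with
  | zero => simp
  | succ n ih =>
    rw [pow_succ', Module.End.mul_apply, ih]
    simp only [Dop, LinearMap.add_apply, Derivation.coeFn_coe, LinearMap.mulLeft_apply]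
    rw [Derivation.leibniz_pow, pderiv_X]
    simp [pow_succ, mul_comm]

lemma Mx_pow (i : ℕ) (f : V k) : (Mx k ^ i) f = X 0 ^ i * f := by
  induction i with
  | zero => simp
  | succ n ih => rw [pow_succ', Module.End.mul_apply, ih]; simp [Mx, pow_succ]; ring

/-- The faithful representation of the Weyl algebra on `k[X,T]`. -/
noncomputable def rho : Weyl k →ₐ[k] Module.End k (V k) :=
  RingQuot.liftAlgHom k ⟨FreeAlgebra.lift k (fun bb => if bb then Dop k else Mx k), by
    rintro _ _ ⟨⟩
    simp only [map_mul, map_add, map_one, FreeAlgebra.lift_ι_apply, if_pos, if_neg,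
      Bool.false_eq_true, ite_false, ite_true]
    exact Dop_Mx k⟩

variable {k}

lemma mkAlgHom_eq (g : FreeAlgebra k Bool) :
    (RingQuot.mkAlgHom k (WeylRel k)) g = RingQuot.mkRingHom (WeylRel k) g := by
  rw [← RingQuot.mkAlgHom_coe k]; rfl

lemma rho_x : rho k (x k) = Mx k := by
  rw [Weyl.x, ← mkAlgHom_eq, rho, RingQuot.liftAlgHom_mkAlgHom_apply]
  simp [FreeAlgebra.lift_ι_apply]

lemma rho_d : rho k (d k) = Dop k := by
  rw [Weyl.d, ← mkAlgHom_eq, rho, RingQuot.liftAlgHom_mkAlgHom_apply]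
  simp [FreeAlgebra.lift_ι_apply]

variable (k)

/-- Evaluation of the representation at `1`. -/
noncomputable def ev : Weyl k →ₗ[k] V k where
  toFun w := rho k w 1
  map_add' a b := by simp [map_add]
  map_smul' r a := by simp [map_smul]

/-- The monomial family in `k[X,T]`. -/
noncomputable def e (ij : ℕ × ℕ) : V k := X 0 ^ ij.1 * X 1 ^ ij.2

variable {k}

lemma ev_b (ij : ℕ × ℕ) : ev k (b (k := k) ij) = e k ij := by
  obtain ⟨i, j⟩ := ij
  simp only [ev, b, e, LinearMap.coe_mk, AddHom.coe_mk, map_mul, map_pow, rho_x, rho_d,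
    Module.End.mul_apply, Dop_pow_one, Mx_pow]

/-- The indexing map into multidegrees. -/
noncomputable def g (ij : ℕ × ℕ) : Fin 2 →₀ ℕ :=
  Finsupp.single 0 ij.1 + Finsupp.single 1 ij.2

lemma g_apply_zero (ij : ℕ × ℕ) : g ij 0 = ij.1 := by simp [g]
lemma g_apply_one (ij : ℕ × ℕ) : g ij 1 = ij.2 := by
  simp [g, Finsupp.single_apply]

lemma g_injective : Function.Injective g := by
  intro a b h
  have h0 := congrArg (fun f => f 0) h
  have h1 := congrArg (fun f => f 1) h
  simp only [g_apply_zero, g_apply_one] at h0 h1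
  exact Prod.ext h0 h1

lemma e_eq_monomial (ij : ℕ × ℕ) : e k ij = monomial (g ij) 1 := by
  rw [e, X_pow_eq_monomial, X_pow_eq_monomial, monomial_mul, mul_one]; rfl

lemma e_li : LinearIndependent k (e k) := by
  have : e k = (basisMonomials (Fin 2) k) ∘ g := by
    funext ij
    rw [e_eq_monomial, coe_basisMonomials]; rfl
  rw [this]
  exact (basisMonomials (Fin 2) k).linearIndependent.comp g g_injective

lemma ev_eq_zero {w : Weyl k} (h : ev k w = 0) : w = 0 := by
  obtain ⟨c, hc⟩ := Finsupp.mem_span_range_iff_exists_finsupp.mp (mem_M w)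
  have h2 : Finsupp.linearCombination k (e k) c = 0 := by
    rw [Finsupp.linearCombination_apply]
    rw [← hc, map_finsuppSum] at h
    simpa only [map_smul, ev_b] using h
  have := linearIndependent_iff.mp e_li c h2
  rw [← hc, this, Finsupp.sum_zero_index]

/-- The key coefficient extraction lemma. -/
lemma vanish (c : ℕ × ℕ →₀ k) (w : ℕ × ℕ → ℕ) (f : ℕ × ℕ → ℕ × ℕ)
    (hsum : (c.sum fun ij a => ((w ij : k) * a) • b (k := k) (f ij)) = 0)
    (ij : ℕ × ℕ) (hij : ij ∈ c.support)
    (huniq : ∀ ij' ∈ c.support, f ij' = f ij → ij' = ij ∨ w ij' = 0) :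
    (w ij : k) * c ij = 0 := by
  have h1 : (c.sum fun ij' a => ((w ij' : k) * a) • e k (f ij')) = 0 := by
    have := congrArg (ev k) hsum
    rw [map_finsuppSum, map_zero] at this
    simpa only [map_smul, ev_b] using this
  have h2 := congrArg (coeff (g (f ij))) h1
  rw [Finsupp.sum, coeff_sum, coeff_zero] at h2
  rw [Finset.sum_eq_single_of_mem ij hij] at h2
  · rw [e_eq_monomial, coeff_smul, coeff_monomial, if_pos rfl, smul_eq_mul, mul_one] at h2
    exact h2
  · intro ij' hij' hne
    rw [e_eq_monomial, coeff_smul, coeff_monomial, smul_eq_mul]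
    by_cases hg : g (f ij') = g (f ij)
    · rcases huniq ij' hij' (g_injective hg) with h | h
      · exact absurd h hne
      · rw [h]; simp
    · rw [if_neg hg, mul_zero]



/-- Linear independence transported to the `b` family. -/
lemma vanish' {ι : Type} (c : ι →₀ k) (f : ι → ℕ × ℕ) (hf : Function.Injective f)
    (hsum : (c.sum fun i a => a • b (k := k) (f i)) = 0) : c = 0 := by
  have h1 : Finsupp.linearCombination k (e k ∘ f) c = 0 := by
    rw [Finsupp.linearCombination_apply]
    have := congrArg (ev k) hsum
    rw [map_finsuppSum, map_zero] at this
    simpa only [map_smul, ev_b, Function.comp_apply] using this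
  have hli : LinearIndependent k (e k ∘ f) := e_li.comp f hf
  exact linearIndependent_iff.mp hli c h1

section CharPart

variable {k : Type} [Field k] {p : ℕ} [CharP k p]

lemma nsmul_p (v : Weyl k) : p • v = 0 := by
  rw [← Nat.cast_smul_eq_nsmul k, CharP.cast_eq_zero, zero_smul]

lemma central_of_commutes {z : Weyl k} (hx : z * x k = x k * z) (hd : z * d k = d k * z) :
    z ∈ Subalgebra.center k (Weyl k) := by
  rw [Subalgebra.mem_center_iff]
  intro w
  have hxc : Commute z (x k) := hx
  have hdc : Commute z (d k) := hd
  induction mem_M w using Submodule.span_induction with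
  | mem w hw =>
    obtain ⟨⟨i, j⟩, rfl⟩ := hw
    exact ((hxc.pow_right i).mul_right (hdc.pow_right j)).eq.symm
  | zero => simp
  | add _ _ _ _ h1 h2 => rw [add_mul, mul_add, h1, h2]
  | smul a _ _ h => rw [smul_mul_assoc, mul_smul_comm, h]

lemma x_pow_p_central : x k ^ p ∈ Subalgebra.center k (Weyl k) := by
  apply central_of_commutes
  · rw [← pow_succ, ← pow_succ']
  · rw [d_mul_x_pow, nsmul_p, add_zero]

lemma d_pow_p_central : d k ^ p ∈ Subalgebra.center k (Weyl k) := by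
  apply central_of_commutes
  · rw [d_pow_mul_x, nsmul_p, add_zero]
  · rw [← pow_succ, ← pow_succ']


lemma support_dvd_of_central {z : Weyl k} (hz : z ∈ Subalgebra.center k (Weyl k))
    (c : ℕ × ℕ →₀ k) (hc : (c.sum fun ij a => a • b (k := k) ij) = z) :
    ∀ ij ∈ c.support, p ∣ ij.1 ∧ p ∣ ij.2 := by
  intro ij hij
  have hcij : c ij ≠ 0 := Finsupp.mem_support_iff.mp hij
  constructor
  · -- use commutation with d
    have hd' : d k * z = z * d k := Subalgebra.mem_center_iff.mp hz (d k)
    have hdz : d k * z = c.sum fun ij a =>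
        a • (b (k := k) (ij.1, ij.2 + 1) + ij.1 • b (ij.1 - 1, ij.2)) := by
      rw [← hc, Finsupp.mul_sum]
      exact Finsupp.sum_congr fun ij _ => by
        obtain ⟨i, j⟩ := ij; rw [mul_smul_comm, d_mul_b]
    have hzd : z * d k = c.sum fun ij a => a • b (k := k) (ij.1, ij.2 + 1) := by
      rw [← hc, Finsupp.sum_mul]
      exact Finsupp.sum_congr fun ij _ => by
        obtain ⟨i, j⟩ := ij; rw [smul_mul_assoc, b_mul_d]
    have hsum : (c.sum fun ij a => ((ij.1 : k) * a) • b (k := k) (ij.1 - 1, ij.2)) = 0 := by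
      calc (c.sum fun ij a => ((ij.1 : k) * a) • b (k := k) (ij.1 - 1, ij.2))
          = (c.sum fun ij a => a • (b (k := k) (ij.1, ij.2 + 1) + ij.1 • b (ij.1 - 1, ij.2)))
            - c.sum fun ij a => a • b (k := k) (ij.1, ij.2 + 1) := by
            rw [Finsupp.sum, Finsupp.sum, Finsupp.sum, ← Finset.sum_sub_distrib]
            exact Finset.sum_congr rfl fun ij _ => by
              rw [smul_add, add_sub_cancel_left, ← Nat.cast_smul_eq_nsmul k, smul_smul,
                mul_comm]
        _ = 0 := by rw [← hdz, ← hzd, hd', sub_self]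
    rcases Nat.eq_zero_or_pos ij.1 with h0 | hpos
    · rw [h0]; exact dvd_zero p
    · have huniq : ∀ ij' ∈ c.support, (ij'.1 - 1, ij'.2) = (ij.1 - 1, ij.2) →
          ij' = ij ∨ ij'.1 = 0 := by
        intro ij' _ heq
        rw [Prod.mk.injEq] at heq
        rcases Nat.eq_zero_or_pos ij'.1 with h0' | hpos'
        · exact Or.inr h0'
        · exact Or.inl (Prod.ext (by omega) heq.2)
      have hv := vanish c (fun ij => ij.1) (fun ij => (ij.1 - 1, ij.2)) hsum ij hij huniq
      rcases mul_eq_zero.mp hv with h | h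
      · exact (CharP.cast_eq_zero_iff k p _).mp h
      · exact absurd h hcij
  · -- use commutation with x
    have hx' : x k * z = z * x k := Subalgebra.mem_center_iff.mp hz (x k)
    have hzx : z * x k = c.sum fun ij a =>
        a • (b (k := k) (ij.1 + 1, ij.2) + ij.2 • b (ij.1, ij.2 - 1)) := by
      rw [← hc, Finsupp.sum_mul]
      exact Finsupp.sum_congr fun ij _ => by
        obtain ⟨i, j⟩ := ij; rw [smul_mul_assoc, b_mul_x]
    have hxz : x k * z = c.sum fun ij a => a • b (k := k) (ij.1 + 1, ij.2) := by
      rw [← hc, Finsupp.mul_sum]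
      exact Finsupp.sum_congr fun ij _ => by
        obtain ⟨i, j⟩ := ij; rw [mul_smul_comm, x_mul_b]
    have hsum : (c.sum fun ij a => ((ij.2 : k) * a) • b (k := k) (ij.1, ij.2 - 1)) = 0 := by
      calc (c.sum fun ij a => ((ij.2 : k) * a) • b (k := k) (ij.1, ij.2 - 1))
          = (c.sum fun ij a => a • (b (k := k) (ij.1 + 1, ij.2) + ij.2 • b (ij.1, ij.2 - 1)))
            - c.sum fun ij a => a • b (k := k) (ij.1 + 1, ij.2) := by
            rw [Finsupp.sum, Finsupp.sum, Finsupp.sum, ← Finset.sum_sub_distrib]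
            exact Finset.sum_congr rfl fun ij _ => by
              rw [smul_add, add_sub_cancel_left, ← Nat.cast_smul_eq_nsmul k, smul_smul,
                mul_comm]
        _ = 0 := by rw [← hzx, ← hxz, ← hx', sub_self]
    rcases Nat.eq_zero_or_pos ij.2 with h0 | hpos
    · rw [h0]; exact dvd_zero p
    · have huniq : ∀ ij' ∈ c.support, (ij'.1, ij'.2 - 1) = (ij.1, ij.2 - 1) →
          ij' = ij ∨ ij'.2 = 0 := by
        intro ij' _ heq
        rw [Prod.mk.injEq] at heq
        rcases Nat.eq_zero_or_pos ij'.2 with h0' | hpos'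
        · exact Or.inr h0'
        · exact Or.inl (Prod.ext heq.1 (by omega))
      have hv := vanish c (fun ij => ij.2) (fun ij => (ij.1, ij.2 - 1)) hsum ij hij huniq
      rcases mul_eq_zero.mp hv with h | h
      · exact (CharP.cast_eq_zero_iff k p _).mp h
      · exact absurd h hcij

set_option maxHeartbeats 1000000 in
lemma center_eq : Subalgebra.center k (Weyl k)
    = Algebra.adjoin k {x k ^ p, d k ^ p} := by
  apply le_antisymm
  · intro z hz
    obtain ⟨c, hc⟩ := Finsupp.mem_span_range_iff_exists_finsupp.mp (mem_M z)
    rw [← hc, Finsupp.sum]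
    apply Subalgebra.sum_mem
    intro ij hij
    apply Subalgebra.smul_mem
    obtain ⟨⟨a', ha⟩, ⟨b', hb⟩⟩ := support_dvd_of_central (p := p) hz c hc ij hij
    have hx_mem : x k ^ p ∈ Algebra.adjoin k {x k ^ p, d k ^ p} :=
      Algebra.subset_adjoin (Set.mem_insert _ _)
    have hd_mem : d k ^ p ∈ Algebra.adjoin k {x k ^ p, d k ^ p} :=
      Algebra.subset_adjoin (Set.mem_insert_of_mem _ rfl)
    have hb_eq : b (k := k) ij = (x k ^ p) ^ a' * (d k ^ p) ^ b' := by
      rw [b, ha, hb, pow_mul, pow_mul]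
    rw [hb_eq]
    exact mul_mem (pow_mem hx_mem a') (pow_mem hd_mem b')
  · apply Algebra.adjoin_le
    rintro w hw
    rcases Set.mem_insert_iff.mp hw with rfl | hw
    · exact x_pow_p_central
    · rw [Set.mem_singleton_iff.mp hw]
      exact d_pow_p_central


/-- The algebra map `k[X₀,X₁] → Z(A₁(k))`, `X₀ ↦ x^p`, `X₁ ↦ ∂^p`. -/
noncomputable def G (k : Type) [Field k] (p : ℕ) [CharP k p] :
    MvPolynomial (Fin 2) k →ₐ[k] Subalgebra.center k (Weyl k) :=
  aeval ![⟨x k ^ p, x_pow_p_central⟩, ⟨d k ^ p, d_pow_p_central⟩]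

/-- The composition with the inclusion of the center. -/
noncomputable def F (k : Type) [Field k] (p : ℕ) [CharP k p] :
    MvPolynomial (Fin 2) k →ₐ[k] Weyl k :=
  (Subalgebra.center k (Weyl k)).val.comp (G k p)

lemma F_apply (q : MvPolynomial (Fin 2) k) : F k p q = ↑(G k p q) := rfl

lemma F_X0 : F k p (X 0) = x k ^ p := by
  rw [F, AlgHom.comp_apply, G, aeval_X]
  rfl

lemma F_X1 : F k p (X 1) = d k ^ p := by
  rw [F, AlgHom.comp_apply, G, aeval_X]
  rfl

lemma F_monomial (m : Fin 2 →₀ ℕ) (a : k) :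
    F k p (monomial m a) = a • b (k := k) (p * m 0, p * m 1) := by
  rw [F, AlgHom.comp_apply, G, aeval_monomial,
    Finsupp.prod_fintype _ _ (fun i => pow_zero _), Fin.prod_univ_two]
  push_cast [map_mul, map_pow]
  simp only [Matrix.cons_val_zero, Matrix.cons_val_one, Matrix.head_cons, b, pow_mul,
    Algebra.smul_def, map_mul, map_pow, Subalgebra.coe_val, AlgHom.commutes]

lemma F_injective (hp : p ≠ 0) : Function.Injective (F k p) := by
  suffices h : ∀ q : MvPolynomial (Fin 2) k, F k p q = 0 → q = 0 by
    intro q r hqr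
    have := h (q - r) (by rw [map_sub, hqr, sub_self])
    exact sub_eq_zero.mp this
  intro q hq
  set c : (Fin 2 →₀ ℕ) →₀ k := ⟨q.support, fun m => coeff m q,
    fun m => MvPolynomial.mem_support_iff⟩ with hcdef
  have hcs : (c.sum fun m a => a • b (k := k) (p * m 0, p * m 1)) = F k p q := by
    rw [Finsupp.sum]
    conv_rhs => rw [q.as_sum, map_sum]
    exact Finset.sum_congr rfl fun m _ => (F_monomial m _).symm
  have hinj : Function.Injective (fun m : Fin 2 →₀ ℕ => (p * m 0, p * m 1)) := by
    intro m m' h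
    rw [Prod.mk.injEq] at h
    have hppos := Nat.pos_of_ne_zero hp
    have h0 : m 0 = m' 0 := Nat.eq_of_mul_eq_mul_left hppos h.1
    have h1 : m 1 = m' 1 := Nat.eq_of_mul_eq_mul_left hppos h.2
    ext i
    fin_cases i <;> assumption
  have hc0 := vanish' c _ hinj (hcs.trans hq)
  apply MvPolynomial.ext
  intro m
  have : c m = 0 := by rw [hc0]; rfl
  rw [coeff_zero]
  exact this

lemma G_surjective : Function.Surjective (G k p) := by
  rintro ⟨y, hy⟩
  have hy' : y ∈ Algebra.adjoin k {x k ^ p, d k ^ p} := by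
    rw [← center_eq (p := p)]; exact hy
  have key : ∀ y ∈ Algebra.adjoin k {x k ^ p, d k ^ p}, ∃ q, F k p q = y := by
    intro y hy
    induction hy using Algebra.adjoin_induction with
    | mem w hw =>
      rcases Set.mem_insert_iff.mp hw with rfl | hw
      · exact ⟨X 0, F_X0⟩
      · rw [Set.mem_singleton_iff.mp hw]
        exact ⟨X 1, F_X1⟩
    | algebraMap r => exact ⟨C r, by rw [← MvPolynomial.algebraMap_eq, AlgHom.commutes]⟩
    | add _ _ _ _ h1 h2 =>
      obtain ⟨q1, hq1⟩ := h1; obtain ⟨q2, hq2⟩ := h2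
      exact ⟨q1 + q2, by rw [map_add, hq1, hq2]⟩
    | mul _ _ _ _ h1 h2 =>
      obtain ⟨q1, hq1⟩ := h1; obtain ⟨q2, hq2⟩ := h2
      exact ⟨q1 * q2, by rw [map_mul, hq1, hq2]⟩
  obtain ⟨q, hq⟩ := key y hy'
  exact ⟨q, Subtype.ext hq⟩

end CharPart

end WeylAux

/-- Over a field `k` of characteristic `p > 0`, the center of the first
Weyl algebra `A₁(k)` is the subalgebra generated by `x^p` and `∂^p`, and it is isomorphic
as a `k`-algebra to a polynomial ring in two variables via `X₀ ↦ x^p`, `X₁ ↦ ∂^p`. -/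
theorem statement6 (k : Type) [Field k] (p : ℕ) (hp : p.Prime) [CharP k p] :
    Subalgebra.center k (Weyl k) = Algebra.adjoin k {Weyl.x k ^ p, Weyl.d k ^ p} ∧
    ∃ e : MvPolynomial (Fin 2) k ≃ₐ[k] Subalgebra.center k (Weyl k),
      (e (MvPolynomial.X 0) : Weyl k) = Weyl.x k ^ p ∧
      (e (MvPolynomial.X 1) : Weyl k) = Weyl.d k ^ p := by
  have hcen := WeylAux.center_eq (k := k) (p := p)
  refine ⟨hcen, ?_⟩
  have hGbij : Function.Bijective (WeylAux.G k p) := by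
    constructor
    · intro a b h
      exact WeylAux.F_injective hp.ne_zero (congrArg Subtype.val h)
    · exact WeylAux.G_surjective
  refine ⟨AlgEquiv.ofBijective (WeylAux.G k p) hGbij, ?_, ?_⟩
  · show ((WeylAux.G k p (MvPolynomial.X 0) : Subalgebra.center k (Weyl k)) : Weyl k)
      = Weyl.x k ^ p
    exact WeylAux.F_X0
  · show ((WeylAux.G k p (MvPolynomial.X 1) : Subalgebra.center k (Weyl k)) : Weyl k)
      = Weyl.d k ^ p
    exact WeylAux.F_X1
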